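/- Let C ∈ ℝ^{n₁×n₂×n₃} and D ∈ ℝ^{n₁×l×n₃}. For any initial tensor X₁ ∈ ℝ^{n₂×l×n₃}, the iteration of Algorithm 3 is well defined while its residuals are nonzero (whenever R_k ≠ 0 one has Q_k ≠ 0), and there exists k ≤ n₂·l·n₃ + 1 such that R_k = 0, i.e., Cᵀ⋆C⋆X_k = Cᵀ⋆D; consequently X_k minimizes ‖C⋆X − D‖ over all X ∈ ℝ^{n₂×l×n₃}. -/

import Mathlib

open Matrix Filter Topology

noncomputable section

/-- A third-order real tensor of size `n₁ × n₂ × n₃`, identified with the family of its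
frontal slices indexed by `ZMod n₃`. -/
abbrev Tensor (n₁ n₂ n₃ : ℕ) := ZMod n₃ → Matrix (Fin n₁) (Fin n₂) ℝ

/-- The T-product of third-order tensors: `(C ⋆ D)(k) = ∑ j, C (k - j) * D j`. -/
def tProd {n₁ n₂ l n₃ : ℕ} [NeZero n₃] (C : Tensor n₁ n₂ n₃) (D : Tensor n₂ l n₃) :
    Tensor n₁ l n₃ :=
  fun k => ∑ j : ZMod n₃, C (k - j) * D j

/-- The tensor transpose: `(Cᵀ)(k) = (C (-k))ᵀ`. -/
def tTrans {n₁ n₂ n₃ : ℕ} (C : Tensor n₁ n₂ n₃) : Tensor n₂ n₁ n₃ :=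
  fun k => (C (-k))ᵀ

/-- The matrix trace of the first frontal slice of a tensor with square slices. -/
def trFirst {m n₃ : ℕ} (S : Tensor m m n₃) : ℝ :=
  (S 0).trace

/-- The inner product `⟨C, D⟩ = ∑ k i j, C k i j * D k i j`. -/
def tInner {n₁ n₂ n₃ : ℕ} [NeZero n₃] (C D : Tensor n₁ n₂ n₃) : ℝ :=
  ∑ k : ZMod n₃, ∑ i : Fin n₁, ∑ j : Fin n₂, C k i j * D k i j

/-- The Frobenius norm `‖C‖ = √⟨C, C⟩`. -/
def tNorm {n₁ n₂ n₃ : ℕ} [NeZero n₃] (C : Tensor n₁ n₂ n₃) : ℝ :=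
  Real.sqrt (tInner C C)

/-- The block circulant matrix of a tensor: its `(k, l)` block is `C (k - l)`. -/
def bCirc {n n₃ : ℕ} [NeZero n₃] (C : Tensor n n n₃) :
    Matrix (ZMod n₃ × Fin n) (ZMod n₃ × Fin n) ℝ :=
  fun p q => C (p.1 - q.1) p.2 q.2

/-- `C` is T-symmetric positive definite: `Cᵀ = C` and `bCirc C` is positive definite. -/
def TSymPD {n n₃ : ℕ} [NeZero n₃] (C : Tensor n n n₃) : Prop :=
  tTrans C = C ∧ (bCirc C).PosDef

section AuxLemmas

variable {n₁ n₂ l n₃ : ℕ} [NeZero n₃]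

lemma tInner_comm (A B : Tensor n₁ n₂ n₃) : tInner A B = tInner B A := by
  simp [tInner, mul_comm]

lemma tInner_add_left (A B E : Tensor n₁ n₂ n₃) :
    tInner (A + B) E = tInner A E + tInner B E := by
  simp [tInner, add_mul, Finset.sum_add_distrib]

lemma tInner_sub_left (A B E : Tensor n₁ n₂ n₃) :
    tInner (A - B) E = tInner A E - tInner B E := by
  simp [tInner, sub_mul, Finset.sum_sub_distrib]

lemma tInner_smul_left (c : ℝ) (A E : Tensor n₁ n₂ n₃) :
    tInner (c • A) E = c * tInner A E := by
  simp [tInner, Finset.mul_sum, mul_assoc]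

lemma tInner_zero_left (E : Tensor n₁ n₂ n₃) : tInner 0 E = 0 := by simp [tInner]

lemma tInner_add_right (A B E : Tensor n₁ n₂ n₃) :
    tInner E (A + B) = tInner E A + tInner E B := by
  rw [tInner_comm, tInner_add_left, tInner_comm A, tInner_comm B]

lemma tInner_sub_right (A B E : Tensor n₁ n₂ n₃) :
    tInner E (A - B) = tInner E A - tInner E B := by
  rw [tInner_comm, tInner_sub_left, tInner_comm A, tInner_comm B]

lemma tInner_smul_right (c : ℝ) (A E : Tensor n₁ n₂ n₃) :
    tInner E (c • A) = c * tInner E A := by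
  rw [tInner_comm, tInner_smul_left, tInner_comm]

lemma tInner_zero_right (E : Tensor n₁ n₂ n₃) : tInner E 0 = 0 := by
  rw [tInner_comm, tInner_zero_left]

lemma tInner_self_nonneg (A : Tensor n₁ n₂ n₃) : 0 ≤ tInner A A :=
  Finset.sum_nonneg fun k _ => Finset.sum_nonneg fun i _ => Finset.sum_nonneg
    fun j _ => mul_self_nonneg _

lemma tInner_self_eq_zero {A : Tensor n₁ n₂ n₃} (h : tInner A A = 0) : A = 0 := by
  funext k
  ext i j
  have h1 : ∀ k ∈ Finset.univ, (0:ℝ) ≤ ∑ i : Fin n₁, ∑ j : Fin n₂, A k i j * A k i j :=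
    fun k _ => Finset.sum_nonneg fun i _ => Finset.sum_nonneg fun j _ => mul_self_nonneg _
  have h2 := (Finset.sum_eq_zero_iff_of_nonneg h1).1 h k (Finset.mem_univ k)
  have h3 : ∀ i ∈ Finset.univ, (0:ℝ) ≤ ∑ j : Fin n₂, A k i j * A k i j :=
    fun i _ => Finset.sum_nonneg fun j _ => mul_self_nonneg _
  have h4 := (Finset.sum_eq_zero_iff_of_nonneg h3).1 h2 i (Finset.mem_univ i)
  have h5 : ∀ j ∈ Finset.univ, (0:ℝ) ≤ A k i j * A k i j := fun j _ => mul_self_nonneg _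
  have h6 := (Finset.sum_eq_zero_iff_of_nonneg h5).1 h4 j (Finset.mem_univ j)
  simpa using mul_self_eq_zero.1 h6

lemma tInner_self_ne_zero {A : Tensor n₁ n₂ n₃} (h : A ≠ 0) : tInner A A ≠ 0 :=
  fun h0 => h (tInner_self_eq_zero h0)

lemma tInner_self_pos {A : Tensor n₁ n₂ n₃} (h : A ≠ 0) : 0 < tInner A A :=
  lt_of_le_of_ne (tInner_self_nonneg A) (Ne.symm (tInner_self_ne_zero h))

lemma tInner_sum_left {ι : Type*} (s : Finset ι) (F : ι → Tensor n₁ n₂ n₃)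
    (Y : Tensor n₁ n₂ n₃) : tInner (∑ i ∈ s, F i) Y = ∑ i ∈ s, tInner (F i) Y := by
  classical
  induction s using Finset.induction_on with
  | empty => simp [tInner_zero_left]
  | insert _ _ h IH => rw [Finset.sum_insert h, Finset.sum_insert h, tInner_add_left, IH]

lemma tProd_add (A : Tensor n₁ n₂ n₃) (X Y : Tensor n₂ l n₃) :
    tProd A (X + Y) = tProd A X + tProd A Y := by
  funext k
  simp [tProd, Matrix.mul_add, Finset.sum_add_distrib]

lemma tProd_sub (A : Tensor n₁ n₂ n₃) (X Y : Tensor n₂ l n₃) :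
    tProd A (X - Y) = tProd A X - tProd A Y := by
  funext k
  simp [tProd, Matrix.mul_sub, Finset.sum_sub_distrib]

lemma tProd_smul (A : Tensor n₁ n₂ n₃) (c : ℝ) (X : Tensor n₂ l n₃) :
    tProd A (c • X) = c • tProd A X := by
  funext k
  simp [tProd, Matrix.mul_smul, Finset.smul_sum]

lemma tTrans_tTrans (A : Tensor n₁ n₂ n₃) : tTrans (tTrans A) = A := by
  funext k; simp [tTrans]

lemma trFirst_tProd (A B : Tensor n₁ n₂ n₃) :
    trFirst (tProd (tTrans A) B) = tInner A B := by
  simp only [trFirst, tProd, tTrans, trace, Matrix.sum_apply, diag_apply, Matrix.mul_apply,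
    transpose_apply, tInner, Finset.sum_apply, zero_sub, neg_neg]
  rw [Finset.sum_comm]
  exact Finset.sum_congr rfl fun m _ => Finset.sum_comm

lemma tInner_tProd (A : Tensor n₁ n₂ n₃) (X : Tensor n₂ l n₃) (Y : Tensor n₁ l n₃) :
    tInner (tProd A X) Y = tInner X (tProd (tTrans A) Y) := by
  have L : tInner (tProd A X) Y =
      ∑ p : ZMod n₃ × Fin n₁ × Fin l × ZMod n₃ × Fin n₂,
        A (p.1 - p.2.2.2.1) p.2.1 p.2.2.2.2 * X p.2.2.2.1 p.2.2.2.2 p.2.2.1 *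
          Y p.1 p.2.1 p.2.2.1 := by
    simp only [tInner, tProd, Finset.sum_apply, Matrix.sum_apply, Matrix.mul_apply,
      Finset.sum_mul, Fintype.sum_prod_type]
  have R : tInner X (tProd (tTrans A) Y) =
      ∑ p : ZMod n₃ × Fin n₂ × Fin l × ZMod n₃ × Fin n₁,
        X p.1 p.2.1 p.2.2.1 * (A (-(p.1 - p.2.2.2.1)) p.2.2.2.2 p.2.1 *
          Y p.2.2.2.1 p.2.2.2.2 p.2.2.1) := by
    simp only [tInner, tProd, tTrans, Finset.sum_apply, Matrix.sum_apply, Matrix.mul_apply,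
      Finset.mul_sum, transpose_apply, Fintype.sum_prod_type]
  rw [L, R]
  refine Fintype.sum_equiv
    ⟨fun p => (p.2.2.2.1, p.2.2.2.2, p.2.2.1, p.1, p.2.1),
     fun p => (p.2.2.2.1, p.2.2.2.2, p.2.2.1, p.1, p.2.1), fun _ => rfl, fun _ => rfl⟩ _ _ ?_
  rintro ⟨k, i, j, m, c⟩
  simp only [Equiv.coe_fn_mk, neg_sub]
  ring

lemma tInner_tProd' (A : Tensor n₁ n₂ n₃) (Y : Tensor n₁ l n₃) (X : Tensor n₂ l n₃) :
    tInner (tProd (tTrans A) Y) X = tInner Y (tProd A X) := by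
  rw [tInner_tProd (tTrans A) Y X, tTrans_tTrans]

/-- The normal-equations operator `X ↦ Cᵀ ⋆ (C ⋆ X)`. -/
def tOp (C : Tensor n₁ n₂ n₃) (U : Tensor n₂ l n₃) : Tensor n₂ l n₃ :=
  tProd (tTrans C) (tProd C U)

lemma tOp_def (C : Tensor n₁ n₂ n₃) (U : Tensor n₂ l n₃) :
    tOp C U = tProd (tTrans C) (tProd C U) := rfl

lemma tOp_add (C : Tensor n₁ n₂ n₃) (U V : Tensor n₂ l n₃) :
    tOp C (U + V) = tOp C U + tOp C V := by
  unfold tOp; rw [tProd_add, tProd_add]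

lemma tOp_sub (C : Tensor n₁ n₂ n₃) (U V : Tensor n₂ l n₃) :
    tOp C (U - V) = tOp C U - tOp C V := by
  unfold tOp; rw [tProd_sub, tProd_sub]

lemma tOp_smul (C : Tensor n₁ n₂ n₃) (c : ℝ) (U : Tensor n₂ l n₃) :
    tOp C (c • U) = c • tOp C U := by
  unfold tOp; rw [tProd_smul, tProd_smul]

lemma tOp_sym (C : Tensor n₁ n₂ n₃) (U W : Tensor n₂ l n₃) :
    tInner (tOp C U) W = tInner U (tOp C W) := by
  unfold tOp
  rw [tInner_tProd' C (tProd C U) W, tInner_tProd C U (tProd C W)]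

lemma tOp_inj (C : Tensor n₁ n₂ n₃) (W : Tensor n₁ l n₃)
    (h : tOp C (tProd (tTrans C) W) = 0) : tProd (tTrans C) W = 0 := by
  have h1 : tInner (tProd C (tProd (tTrans C) W)) (tProd C (tProd (tTrans C) W)) = 0 := by
    rw [tInner_tProd, ← tOp_def, h, tInner_zero_right]
  have h2 : tProd C (tProd (tTrans C) W) = 0 := tInner_self_eq_zero h1
  have h3 : tInner (tProd (tTrans C) W) (tProd (tTrans C) W) = 0 := by
    rw [tInner_tProd', h2, tInner_zero_right]
  exact tInner_self_eq_zero h3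

lemma finrank_tensor (a b c : ℕ) [NeZero c] :
    Module.finrank ℝ (Tensor a b c) = a * b * c := by
  rw [Module.finrank_pi_fintype]
  simp [Module.finrank_matrix]
  ring

/-- The auxiliary sequence `Z` with `Z 1 = R 1`,
`Z (i+1) = R (i+1) - βᵢ • Z i`, satisfying `Q i = tOp C (Z i)`. -/
def Zseq {n₂ l n₃ : ℕ} [NeZero n₃] (R P Q : ℕ → Tensor n₂ l n₃) : ℕ → Tensor n₂ l n₃
  | 0 => 0
  | 1 => R 1
  | (i+2) => R (i+2) -
      (trFirst (tProd (tTrans (P (i+2))) (Q (i+1))) / tInner (Q (i+1)) (Q (i+1))) •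
        Zseq R P Q (i+1)

lemma Zseq_one {n₂ l n₃ : ℕ} [NeZero n₃] (R P Q : ℕ → Tensor n₂ l n₃) :
    Zseq R P Q 1 = R 1 := rfl

lemma Zseq_succ {n₂ l n₃ : ℕ} [NeZero n₃] (R P Q : ℕ → Tensor n₂ l n₃) (i : ℕ) (hi : 1 ≤ i) :
    Zseq R P Q (i+1) = R (i+1) -
      (trFirst (tProd (tTrans (P (i+1))) (Q i)) / tInner (Q i) (Q i)) • Zseq R P Q i := by
  obtain ⟨j, rfl⟩ : ∃ j, i = j + 1 := ⟨i - 1, by omega⟩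
  rfl

end AuxLemmas

theorem stmt_17 (n₁ n₂ l n₃ : ℕ) [NeZero n₃] (C : Tensor n₁ n₂ n₃)
    (D : Tensor n₁ l n₃)
    (X R P Q : ℕ → Tensor n₂ l n₃)
    (hR : ∀ i, 1 ≤ i → R i = tProd (tTrans C) D - tProd (tTrans C) (tProd C (X i)))
    (hP : ∀ i, 1 ≤ i → P i = tProd (tTrans C) (tProd C (R i)))
    (hQ1 : Q 1 = P 1)
    (hX : ∀ i, 1 ≤ i → X (i + 1) = X i +
      (tInner (R i) (R i) / tInner (Q i) (Q i)) • Q i)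
    (hQ : ∀ i, 1 ≤ i → Q (i + 1) = P (i + 1) -
      (trFirst (tProd (tTrans (P (i + 1))) (Q i)) / tInner (Q i) (Q i)) • Q i)
    :
    (∀ k, 1 ≤ k → R k ≠ 0 → Q k ≠ 0) ∧
    ∃ k, 1 ≤ k ∧ k ≤ n₂ * l * n₃ + 1 ∧ R k = 0 ∧
      tProd (tTrans C) (tProd C (X k)) = tProd (tTrans C) D ∧
      ∀ X' : Tensor n₂ l n₃,
        tNorm (tProd C (X k) - D) ≤ tNorm (tProd C X' - D) := by
  classical
  -- restated hypotheses in terms of `tOp`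
  have hR' : ∀ i, 1 ≤ i → R i = tProd (tTrans C) D - tOp C (X i) := fun i hi => hR i hi
  have hP' : ∀ i, 1 ≤ i → P i = tOp C (R i) := fun i hi => hP i hi
  have hQ' : ∀ i, 1 ≤ i → Q (i + 1) = P (i + 1) -
      (tInner (P (i + 1)) (Q i) / tInner (Q i) (Q i)) • Q i := by
    intro i hi
    rw [hQ i hi, trFirst_tProd]
  -- the residual recurrence
  have hRrec : ∀ i, 1 ≤ i → R (i + 1) = R i -
      (tInner (R i) (R i) / tInner (Q i) (Q i)) • tOp C (Q i) := by
    intro i hi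
    rw [hR' (i+1) (by omega), hX i hi, tOp_add, tOp_smul, hR' i hi]
    abel
  -- orthogonality of consecutive directions
  have hQQnext : ∀ i, 1 ≤ i → Q i ≠ 0 → tInner (Q (i+1)) (Q i) = 0 := by
    intro i hi hne
    rw [hQ' i hi, tInner_sub_left, tInner_smul_left,
      div_mul_cancel₀ _ (tInner_self_ne_zero hne), sub_self]
  -- ⟨Q i, P i⟩ = ⟨Q i, Q i⟩
  have hQP : ∀ i, 1 ≤ i → (∀ j, 1 ≤ j → j < i → Q j ≠ 0) →
      tInner (Q i) (P i) = tInner (Q i) (Q i) := by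
    intro i hi hprev
    match i, hi with
    | 1, _ => rw [hQ1]
    | (j+2), _ =>
      have hj : 1 ≤ j + 1 := by omega
      have hne : Q (j+1) ≠ 0 := hprev (j+1) hj (by omega)
      have hPe : P (j+2) = Q (j+2) +
          (tInner (P (j+2)) (Q (j+1)) / tInner (Q (j+1)) (Q (j+1))) • Q (j+1) := by
        rw [hQ' (j+1) hj]; abel
      rw [hPe, tInner_add_right, tInner_smul_right, hQQnext (j+1) hj hne, mul_zero, add_zero]
  -- Q i = tOp C (Z i)
  have hQZ : ∀ i, 1 ≤ i → Q i = tOp C (Zseq R P Q i) := by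
    intro i hi
    induction i, hi using Nat.le_induction with
    | base => rw [hQ1, hP' 1 le_rfl, Zseq_one]
    | succ i hi IH =>
      rw [hQ i hi, Zseq_succ R P Q i hi, tOp_sub, tOp_smul, ← IH, hP' (i+1) (by omega)]
  -- Z i is in the range of (tTrans C ⋆ ·)
  have hZrange : ∀ i, 1 ≤ i → ∃ W, Zseq R P Q i = tProd (tTrans C) W := by
    intro i hi
    induction i, hi using Nat.le_induction with
    | base =>
      refine ⟨D - tProd C (X 1), ?_⟩
      rw [Zseq_one, hR 1 le_rfl, tProd_sub]
    | succ i hi IH =>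
      obtain ⟨W, hW⟩ := IH
      refine ⟨(D - tProd C (X (i+1))) -
        (trFirst (tProd (tTrans (P (i+1))) (Q i)) / tInner (Q i) (Q i)) • W, ?_⟩
      rw [Zseq_succ R P Q i hi, hR (i+1) (by omega), tProd_sub (tTrans C),
        tProd_smul, ← hW, tProd_sub (tTrans C)]
  -- orthogonality of Z i with later residuals
  have hZorth : ∀ k, (∀ a b, 1 ≤ a → a < b → b ≤ k → tInner (R a) (R b) = 0) →
      ∀ i, 1 ≤ i → ∀ j, i < j → j ≤ k → tInner (Zseq R P Q i) (R j) = 0 := by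
    intro k hO i hi
    induction i, hi using Nat.le_induction with
    | base =>
      intro j h1 h2
      rw [Zseq_one]
      exact hO 1 j le_rfl h1 h2
    | succ i hi IH =>
      intro j h1 h2
      rw [Zseq_succ R P Q i hi, tInner_sub_left, tInner_smul_left,
        hO (i+1) j (by omega) h1 h2, IH j (by omega) h2]
      ring
  -- ⟨Z i, R i⟩ = ⟨R i, R i⟩
  have hZself : ∀ k, (∀ a b, 1 ≤ a → a < b → b ≤ k → tInner (R a) (R b) = 0) →
      ∀ i, 1 ≤ i → i ≤ k → tInner (Zseq R P Q i) (R i) = tInner (R i) (R i) := by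
    intro k hO i hi hik
    rcases eq_or_lt_of_le hi with h1 | h1
    · rw [← h1, Zseq_one]
    · obtain ⟨m, rfl⟩ : ∃ m, i = m + 1 := ⟨i - 1, by omega⟩
      have hm : 1 ≤ m := by omega
      rw [Zseq_succ R P Q m hm, tInner_sub_left, tInner_smul_left,
        hZorth k hO m hm (m+1) (by omega) hik]
      ring
  -- nonvanishing of directions
  have hQne : ∀ k, (∀ a b, 1 ≤ a → a < b → b ≤ k → tInner (R a) (R b) = 0) →
      ∀ i, 1 ≤ i → i ≤ k → R i ≠ 0 → Q i ≠ 0 := by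
    intro k hO i hi hik hRne hQ0
    obtain ⟨W, hW⟩ := hZrange i hi
    have h1 : tOp C (Zseq R P Q i) = 0 := by rw [← hQZ i hi]; exact hQ0
    have h2 : Zseq R P Q i = 0 := by
      rw [hW] at h1 ⊢
      exact tOp_inj C W h1
    have h3 := hZself k hO i hi hik
    rw [h2, tInner_zero_left] at h3
    exact hRne (tInner_self_eq_zero h3.symm)
  -- THE KEY ORTHOGONALITY INDUCTION
  have KEY : ∀ k, 1 ≤ k → (∀ i, 1 ≤ i → i ≤ k → R i ≠ 0) →
      ∀ i j, 1 ≤ i → i < j → j ≤ k →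
        tInner (R i) (R j) = 0 ∧ tInner (Q i) (Q j) = 0 := by
    intro k hk
    induction k, hk using Nat.le_induction with
    | base => intro _ i j h1 h2 h3; omega
    | succ k hk IH =>
      intro hnz
      have hnz' : ∀ i, 1 ≤ i → i ≤ k → R i ≠ 0 := fun i h1 h2 => hnz i h1 (by omega)
      have IH' := IH hnz'
      have hOR : ∀ a b, 1 ≤ a → a < b → b ≤ k → tInner (R a) (R b) = 0 :=
        fun a b ha hab hb => (IH' a b ha hab hb).1
      have hOQ : ∀ a b, 1 ≤ a → a < b → b ≤ k → tInner (Q a) (Q b) = 0 :=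
        fun a b ha hab hb => (IH' a b ha hab hb).2
      have hQneK : ∀ i, 1 ≤ i → i ≤ k → Q i ≠ 0 :=
        fun i h1 h2 => hQne k hOR i h1 h2 (hnz' i h1 h2)
      -- new residual orthogonality
      have newR : ∀ i, 1 ≤ i → i ≤ k → tInner (R (k+1)) (R i) = 0 := by
        intro i hi hik
        rw [hRrec k hk, tInner_sub_left, tInner_smul_left]
        have hTQR : tInner (tOp C (Q k)) (R i) = tInner (Q k) (P i) := by
          rw [tOp_sym, ← hP' i hi]
        rcases eq_or_lt_of_le hik with rfl | hlt
        · -- i = k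
          rw [hTQR, hQP i hi (fun j h1 h2 => hQneK j h1 (by omega)),
            div_mul_cancel₀ _ (tInner_self_ne_zero (hQneK i hi le_rfl)), sub_self]
        · -- i < k
          have hRkRi : tInner (R k) (R i) = 0 := by
            rw [tInner_comm]; exact hOR i k hi hlt le_rfl
          have hQkPi : tInner (Q k) (P i) = 0 := by
            rcases eq_or_lt_of_le hi with h1 | h1
            · rw [← h1, ← hQ1, tInner_comm]
              exact hOQ 1 k le_rfl (by omega) le_rfl
            · obtain ⟨m, rfl⟩ : ∃ m, i = m + 1 := ⟨i - 1, by omega⟩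
              have hm : 1 ≤ m := by omega
              have hPe : P (m+1) = Q (m+1) +
                  (tInner (P (m+1)) (Q m) / tInner (Q m) (Q m)) • Q m := by
                rw [hQ' m hm]; abel
              rw [hPe, tInner_add_right, tInner_smul_right]
              rw [show tInner (Q k) (Q (m+1)) = 0 by
                  rw [tInner_comm]; exact hOQ (m+1) k (by omega) hlt le_rfl,
                show tInner (Q k) (Q m) = 0 by
                  rw [tInner_comm]; exact hOQ m k hm (by omega) le_rfl]
              ring
          rw [hRkRi, hTQR, hQkPi, mul_zero, sub_zero]
      -- new direction orthogonality
      have newQ : ∀ i, 1 ≤ i → i ≤ k → tInner (Q (k+1)) (Q i) = 0 := by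
        intro i hi hik
        rcases eq_or_lt_of_le hik with rfl | hlt
        · exact hQQnext i hi (hQneK i hi le_rfl)
        · rw [hQ' k hk, tInner_sub_left, tInner_smul_left]
          have hQkQi : tInner (Q k) (Q i) = 0 := by
            rw [tInner_comm]; exact hOQ i k hi hlt le_rfl
          have h1 : tInner (P (k+1)) (Q i) = tInner (R (k+1)) (tOp C (Q i)) := by
            rw [hP' (k+1) (by omega), tOp_sym]
          have h2 : R i - R (i+1) =
              (tInner (R i) (R i) / tInner (Q i) (Q i)) • tOp C (Q i) := by
            rw [hRrec i hi]; abel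
          have h3 : tInner (R (k+1)) (R i) - tInner (R (k+1)) (R (i+1)) =
              (tInner (R i) (R i) / tInner (Q i) (Q i)) *
                tInner (R (k+1)) (tOp C (Q i)) := by
            rw [← tInner_sub_right, h2, tInner_smul_right]
          rw [newR i hi (by omega), newR (i+1) (by omega) (by omega), sub_zero] at h3
          have hα : tInner (R i) (R i) / tInner (Q i) (Q i) ≠ 0 :=
            div_ne_zero (tInner_self_ne_zero (hnz' i hi (by omega)))
              (tInner_self_ne_zero (hQneK i hi (by omega)))
          have h6 : tInner (R (k+1)) (tOp C (Q i)) = 0 := by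
            rcases mul_eq_zero.mp h3.symm with h | h
            · exact absurd h hα
            · exact h
          rw [h1, h6, hQkQi, mul_zero, sub_zero]
      intro i j h1 h2 h3
      rcases Nat.lt_or_ge j (k+1) with hj | hj
      · exact IH' i j h1 h2 (by omega)
      · have hjk : j = k + 1 := by omega
        subst hjk
        constructor
        · rw [tInner_comm]; exact newR i h1 (by omega)
        · rw [tInner_comm]; exact newQ i h1 (by omega)
  -- residuals stay zero once zero
  have hprop : ∀ i, 1 ≤ i → R i = 0 → R (i+1) = 0 := by
    intro i hi h0
    have hXeq : X (i+1) = X i := by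
      rw [hX i hi, h0, tInner_zero_left, zero_div, zero_smul, add_zero]
    rw [hR' (i+1) (by omega), hXeq, ← hR' i hi]
    exact h0
  have hzero_mono : ∀ i j, 1 ≤ i → i ≤ j → R i = 0 → R j = 0 := by
    intro i j hi hij h0
    induction j, hij using Nat.le_induction with
    | base => exact h0
    | succ j hj IH => exact hprop j (le_trans hi hj) IH
  -- PART 1
  have part1 : ∀ k, 1 ≤ k → R k ≠ 0 → Q k ≠ 0 := by
    intro k hk hRk
    have hnz : ∀ i, 1 ≤ i → i ≤ k → R i ≠ 0 :=
      fun i hi hik h0 => hRk (hzero_mono i k hi hik h0)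
    have hO := KEY k hk hnz
    exact hQne k (fun a b ha hab hb => (hO a b ha hab hb).1) k hk le_rfl hRk
  -- PART 2: existence of a vanishing residual
  have hex : ∃ k, 1 ≤ k ∧ k ≤ n₂ * l * n₃ + 1 ∧ R k = 0 := by
    by_contra hc
    push_neg at hc
    have hnz : ∀ i, 1 ≤ i → i ≤ n₂ * l * n₃ + 1 → R i ≠ 0 := fun i hi hik => hc i hi hik
    have hO := KEY (n₂ * l * n₃ + 1) (by omega) hnz
    have hli : LinearIndependent ℝ (fun i : Fin (n₂ * l * n₃ + 1) => R (i.1 + 1)) := by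
      rw [linearIndependent_iff']
      intro s g hsum i hi
      have h1 : tInner (∑ j ∈ s, g j • R (j.1+1)) (R (i.1+1)) = 0 := by
        rw [hsum, tInner_zero_left]
      rw [tInner_sum_left] at h1
      have h2 : ∀ j ∈ s, j ≠ i → tInner (g j • R (j.1+1)) (R (i.1+1)) = 0 := by
        intro j _ hji
        have hne : j.1 ≠ i.1 := fun h => hji (Fin.ext h)
        rw [tInner_smul_left]
        rcases Nat.lt_or_ge j.1 i.1 with h | h
        · rw [(hO (j.1+1) (i.1+1) (by omega) (by omega) (by omega)).1, mul_zero]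
        · rw [tInner_comm, (hO (i.1+1) (j.1+1) (by omega) (by omega) (by omega)).1, mul_zero]
      rw [Finset.sum_eq_single i h2 (fun h => absurd hi h)] at h1
      rw [tInner_smul_left] at h1
      rcases mul_eq_zero.mp h1 with h | h
      · exact h
      · exact absurd (tInner_self_eq_zero h) (hnz (i.1+1) (by omega) (by omega))
    have hcard := hli.fintype_card_le_finrank
    rw [finrank_tensor n₂ l n₃] at hcard
    simp only [Fintype.card_fin] at hcard
    omega
  obtain ⟨k, hk1, hk2, hk0⟩ := hex
  refine ⟨part1, k, hk1, hk2, hk0, ?_, ?_⟩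
  · -- normal equation
    have h := hR k hk1
    rw [hk0] at h
    exact (sub_eq_zero.mp h.symm).symm
  · -- minimization
    have hTXb : tProd (tTrans C) (tProd C (X k)) = tProd (tTrans C) D := by
      have h := hR k hk1
      rw [hk0] at h
      exact (sub_eq_zero.mp h.symm).symm
    intro X'
    unfold tNorm
    apply Real.sqrt_le_sqrt
    have hsplit : tProd C X' - D = (tProd C (X k) - D) + tProd C (X' - X k) := by
      rw [tProd_sub]; abel
    have hcross : tInner (tProd C (X' - X k)) (tProd C (X k) - D) = 0 := by
      rw [tInner_tProd, tProd_sub (tTrans C), hTXb, sub_self, tInner_zero_right]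
    rw [hsplit, tInner_add_left, tInner_add_right, tInner_add_right,
      tInner_comm (tProd C (X k) - D) (tProd C (X' - X k)), hcross]
    have hnn := tInner_self_nonneg (tProd C (X' - X k))
    linarith
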